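/- arXiv:1706.07936 — 4 statements merged into one kernel-verified Lean document; each statement's English description precedes it below -/
import Mathlib

section
/- Let I be a relational instance over a signature S, and for each element a of the domain of I introduce countably many fresh copies a_j (j ∈ ℕ, with a_0 = a). Define Blowup(I) as the instance with facts {R(a^1_{i_1}, ..., a^n_{i_n}) : R(a^1, ..., a^n) ∈ I, (i_1,...,i_n) ∈ ℕ^n}. Then I and Blowup(I) satisfy exactly the same equality-free first-order sentences over S. -/
/-! Statement 1: an instance `I` and its blowup (with countably many fresh
copies of each domain element) satisfy exactly the same equality-free
first-order sentences (active-domain semantics). -/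

/-- A relational signature: a type of relation symbols with arities. -/
structure RelSig where
  Rel : Type
  ar : Rel → ℕ

/-- A fact over signature `S` with domain `D`. -/
abbrev DBFact (S : RelSig) (D : Type) := Σ R : S.Rel, Fin (S.ar R) → D

/-- An instance: a set of facts. -/
abbrev DBInst (S : RelSig) (D : Type) := Set (DBFact S D)

/-- The active domain of an instance. -/
def adom {S : RelSig} {D : Type} (I : DBInst S D) : Set D :=
  {d | ∃ f ∈ I, ∃ i, f.2 i = d}

/-- Equality-free first-order formulas over signature `S`, de Bruijn style:
`EFForm S n` has at most `n` free variables.  (¬, ∧, ∃ are a complete set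
of connectives.)  Note there is no equality atom. -/
inductive EFForm (S : RelSig) : ℕ → Type
  | atom {n : ℕ} (R : S.Rel) (args : Fin (S.ar R) → Fin n) : EFForm S n
  | not {n : ℕ} : EFForm S n → EFForm S n
  | and {n : ℕ} : EFForm S n → EFForm S n → EFForm S n
  | ex {n : ℕ} : EFForm S (n + 1) → EFForm S n

/-- Active-domain semantics of equality-free first-order logic. -/
def EFSat {S : RelSig} {D : Type} (I : DBInst S D) :
    {n : ℕ} → (Fin n → D) → EFForm S n → Prop
  | _, ν, .atom R args => (⟨R, fun i => ν (args i)⟩ : DBFact S D) ∈ I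
  | _, ν, .not φ => ¬ EFSat I ν φ
  | _, ν, .and φ ψ => EFSat I ν φ ∧ EFSat I ν ψ
  | _, ν, .ex φ => ∃ d ∈ adom I, EFSat I (Fin.cons d ν) φ

/-- The blowup of an instance: each element `a` is replaced by the countably
many copies `(a, j)`, `j ∈ ℕ` (the copy `(a, 0)` playing the role of `a`
itself), and each fact `R(a¹,…,aⁿ)` by all the facts
`R((a¹,i₁),…,(aⁿ,iₙ))`. -/
def Blowup {S : RelSig} {D : Type} (I : DBInst S D) : DBInst S (D × ℕ) :=
  { f | ∃ (a : Fin (S.ar f.1) → D) (k : Fin (S.ar f.1) → ℕ),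
      (⟨f.1, a⟩ : DBFact S D) ∈ I ∧ f.2 = fun i => (a i, k i) }


lemma adom_blowup_fst {S : RelSig} {D : Type} {I : DBInst S D} {p : D × ℕ}
    (hp : p ∈ adom (Blowup I)) : p.1 ∈ adom I := by
  obtain ⟨f, ⟨a, k, haI, hf2⟩, i, hi⟩ := hp
  exact ⟨⟨f.1, a⟩, haI, i, by rw [← hi, hf2]⟩

lemma adom_blowup_mk {S : RelSig} {D : Type} {I : DBInst S D} {d : D}
    (hd : d ∈ adom I) : ((d, 0) : D × ℕ) ∈ adom (Blowup I) := by
  obtain ⟨⟨R, a⟩, ha, i, hi⟩ := hd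
  exact ⟨⟨R, fun j => (a j, 0)⟩, ⟨a, fun _ => 0, ha, rfl⟩, i, by simp only [Prod.mk.injEq]; exact ⟨hi, trivial⟩⟩

lemma efsat_blowup {S : RelSig} {D : Type} (I : DBInst S D) :
    ∀ {n : ℕ} (φ : EFForm S n) (ν : Fin n → D) (ν' : Fin n → D × ℕ),
    (∀ i, (ν' i).1 = ν i) → (EFSat I ν φ ↔ EFSat (Blowup I) ν' φ) := by
  intro n φ
  induction φ with
  | atom R args =>
    intro ν ν' h
    simp only [EFSat]
    constructor
    · intro hI
      refine ⟨fun i => ν (args i), fun i => (ν' (args i)).2, hI, ?_⟩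
      funext i
      show ν' (args i) = (ν (args i), (ν' (args i)).2)
      rw [← h (args i)]
    · rintro ⟨a, k, haI, hf2⟩
      have ha : a = fun i => ν (args i) := by
        funext i
        have h2 : ν' (args i) = (a i, k i) := congrFun hf2 i
        rw [← h (args i), h2]
      rwa [ha] at haI
  | not φ ih =>
    intro ν ν' h
    simp only [EFSat]
    rw [ih ν ν' h]
  | and φ ψ ih1 ih2 =>
    intro ν ν' h
    simp only [EFSat]
    rw [ih1 ν ν' h, ih2 ν ν' h]
  | ex φ ih =>
    intro ν ν' h
    simp only [EFSat]
    constructor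
    · rintro ⟨d, hd, hsat⟩
      refine ⟨(d, 0), adom_blowup_mk hd, ?_⟩
      rw [← ih (Fin.cons d ν) (Fin.cons (d,0) ν') ?_]
      · exact hsat
      · intro i
        refine Fin.cases ?_ ?_ i <;> simp [h]
    · rintro ⟨p, hp, hsat⟩
      refine ⟨p.1, adom_blowup_fst hp, ?_⟩
      rw [ih (Fin.cons p.1 ν) (Fin.cons p ν') ?_]
      · exact hsat
      · intro i
        refine Fin.cases ?_ ?_ i <;> simp [h]

/-- `I` and `Blowup I` satisfy the same equality-free
first-order sentences. -/
theorem stmt1 (S : RelSig) (D : Type) (I : DBInst S D) (φ : EFForm S 0) :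
    EFSat I Fin.elim0 φ ↔ EFSat (Blowup I) Fin.elim0 φ := by
  exact efsat_blowup I φ Fin.elim0 Fin.elim0 (fun i => i.elim0)
end

section
/- Let O be the set computed by the truncated accessibility axiom saturation algorithm from a set Σ of inclusion dependencies of width w and a set Δ of truncated accessibility axioms, using breadth bound w. Then every triple (R, p⃗, j) added to O represents a truncated accessibility axiom entailed by Σ ∪ Δ, and conversely every truncated accessibility axiom of breadth at most w entailed by Σ ∪ Δ has its triple in O. -/
/-! Statement 7: soundness and completeness of the truncated accessibility
axiom saturation algorithm.  Every triple `(R, p⃗, j)` added to the set `O`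
represents a truncated accessibility axiom entailed by the inclusion
dependencies `Σ` together with the original truncated accessibility axioms
`Δ` (one per access method), and conversely every entailed truncated
accessibility axiom of breadth at most `w` has its triple in `O`. -/

/-- Facts are pairs of a relation name and a tuple of values. -/
abbrev LFact (D : Type) := ℕ × List D

/-- The active domain of a (list-based) instance. -/
def adomL {D : Type} (I : Set (LFact D)) : Set D := {d | ∃ f ∈ I, d ∈ f.2}

/-- Well-formedness: tuples have the right length. -/
def WFInst (ar : ℕ → ℕ) {D : Type} (I : Set (LFact D)) : Prop :=
  ∀ f ∈ I, f.2.length = ar f.1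

/-- An inclusion dependency (single body atom and single head atom, no
repeated variables) exporting `width` many variables from the body
positions `bpos` to the head positions `hpos`. -/
structure IDl where
  B : ℕ
  H : ℕ
  width : ℕ
  bpos : Fin width → ℕ
  hpos : Fin width → ℕ

/-- Satisfaction of an inclusion dependency. -/
def SatIDl (ar : ℕ → ℕ) (δ : IDl) {D : Type} (I : Set (LFact D)) : Prop :=
  ∀ l : List D, (δ.B, l) ∈ I →
    ∃ l' : List D, (δ.H, l') ∈ I ∧ l'.length = ar δ.H ∧
      ∀ t, l'[δ.hpos t]? = l[δ.bpos t]?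

/-- An access method: a relation and its (finite) set of input positions. -/
structure Methl where
  rel : ℕ
  input : Finset ℕ

/-- Satisfaction of the truncated accessibility axiom
`(⋀_{i ∈ p} accessible(x_i)) ∧ R(x⃗) → accessible(x_j)` in an instance `I`
with accessibility set `A`. -/
def AxSat (ar : ℕ → ℕ) (R : ℕ) (p : Finset ℕ) (j : ℕ) {D : Type}
    (I : Set (LFact D)) (A : Set D) : Prop :=
  ∀ l : List D, (R, l) ∈ I → l.length = ar R →
    (∀ i ∈ p, ∀ d, l[i]? = some d → d ∈ A) →
    ∀ d, l[j]? = some d → d ∈ A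

/-- Entailment of the truncated accessibility axiom `(R, p, j)` by the
inclusion dependencies `Sid` together with the original truncated
accessibility axioms of the methods in `Ms` (axiom `(mt.rel, mt.input, j')`
for every method `mt` and position `j'`). -/
def EntailedAx (ar : ℕ → ℕ) (Sid : Set IDl) (Ms : Set Methl)
    (R : ℕ) (p : Finset ℕ) (j : ℕ) : Prop :=
  ∀ (D : Type) (I : Set (LFact D)) (A : Set D), WFInst ar I →
    (∀ δ ∈ Sid, SatIDl ar δ I) →
    (∀ mt ∈ Ms, ∀ j' < ar mt.rel, AxSat ar mt.rel mt.input j' I A) →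
    AxSat ar R p j I A

/-- The set `O` of triples computed by the truncated accessibility axiom
saturation algorithm with breadth bound `w`: initialization with the
trivial axioms, the backwards-rewriting rule (ID), the rule (Transitivity)
and the rule (Access). -/
inductive InO (ar : ℕ → ℕ) (Sid : Set IDl) (Ms : Set Methl) (w : ℕ) :
    ℕ → Finset ℕ → ℕ → Prop
  | triv {R : ℕ} {p : Finset ℕ} {j : ℕ} (hj : j ∈ p) (hp : p.card ≤ w) :
      InO ar Sid Ms w R p j
  | id {δ : IDl} (hδ : δ ∈ Sid) (T : Finset (Fin δ.width)) (t : Fin δ.width)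
      (h : InO ar Sid Ms w δ.H (T.image δ.hpos) (δ.hpos t)) :
      InO ar Sid Ms w δ.B (T.image δ.bpos) (δ.bpos t)
  | trans {R : ℕ} {p r ts : Finset ℕ} {t' : ℕ}
      (hts : ts.card ≤ w) (hp : p.card ≤ w)
      (h1 : ∀ t ∈ ts, InO ar Sid Ms w R p t)
      (h2 : InO ar Sid Ms w R r t') (hsub : r ⊆ p ∪ ts) :
      InO ar Sid Ms w R p t'
  | access {mt : Methl} (hmt : mt ∈ Ms) {p : Finset ℕ} (hp : p.card ≤ w)
      (hin : ∀ i ∈ mt.input, InO ar Sid Ms w mt.rel p i)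
      {j : ℕ} (hj : j < ar mt.rel) :
      InO ar Sid Ms w mt.rel p j

section Aux

open Classical in
/-- Boolean indicator of a proposition. -/
noncomputable def bIf (P : Prop) : Bool := if P then true else false

lemma bIf_eq_true {P : Prop} (h : P) : bIf P = true := by
  classical simp [bIf, h]

lemma of_bIf_eq_true {P : Prop} (h : bIf P = true) : P := by
  classical
  by_contra hc
  simp [bIf, hc] at h

/-- Positions derivable from a set `X` of positions of relation `S`,
using the triples of `O` and the access methods. -/
inductive Der (ar : ℕ → ℕ) (Sid : Set IDl) (Ms : Set Methl) (w : ℕ) :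
    ℕ → Set ℕ → ℕ → Prop
  | mem {S : ℕ} {X : Set ℕ} {q : ℕ} (h : q ∈ X) : Der ar Sid Ms w S X q
  | ino {S : ℕ} {X : Set ℕ} (p : Finset ℕ) {q : ℕ}
      (hsub : ∀ i ∈ p, Der ar Sid Ms w S X i) (hp : p.card ≤ w)
      (hino : InO ar Sid Ms w S p q) : Der ar Sid Ms w S X q
  | acc {X : Set ℕ} (mt : Methl) (hmt : mt ∈ Ms) {q : ℕ}
      (hin : ∀ i ∈ mt.input, Der ar Sid Ms w mt.rel X i)
      (hq : q < ar mt.rel) : Der ar Sid Ms w mt.rel X q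

lemma der_trans {ar : ℕ → ℕ} {Sid : Set IDl} {Ms : Set Methl} {w : ℕ}
    {S : ℕ} {Y : Set ℕ} {q : ℕ} (h : Der ar Sid Ms w S Y q) :
    ∀ X : Set ℕ, (∀ y ∈ Y, Der ar Sid Ms w S X y) → Der ar Sid Ms w S X q := by
  induction h with
  | mem h => exact fun X hY => hY _ h
  | ino p hsub hp hino ih =>
      exact fun X hY => Der.ino p (fun i hi => ih i hi X hY) hp hino
  | acc mt hmt hin hq ih =>
      exact fun X hY => Der.acc mt hmt (fun i hi => ih i hi X hY) hq

lemma der_to_inO {ar : ℕ → ℕ} {Sid : Set IDl} {Ms : Set Methl} {w : ℕ}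
    {S : ℕ} {X : Set ℕ} {q : ℕ} (h : Der ar Sid Ms w S X q) :
    ∀ P : Finset ℕ, X = ↑P → P.card ≤ w → InO ar Sid Ms w S P q := by
  induction h with
  | mem h =>
      rintro P rfl hPw
      exact InO.triv h hPw
  | ino p hsub hp hino ih =>
      rintro P rfl hPw
      exact InO.trans hp hPw (fun t ht => ih t ht P rfl hPw) hino
        (Finset.subset_union_right)
  | acc mt hmt hin hq ih =>
      rintro P rfl hPw
      exact InO.access hmt hPw (fun i hi => ih i hi P rfl hPw) hq

/-- The canonical (critical) Boolean instance: all tuples of the right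
length that are closed under derivability of `true`-positions. -/
def CInst (ar : ℕ → ℕ) (Sid : Set IDl) (Ms : Set Methl) (w : ℕ) :
    Set (LFact Bool) :=
  {f | f.2.length = ar f.1 ∧
    ∀ q < ar f.1,
      Der ar Sid Ms w f.1 {i | f.2[i]? = some true} q → f.2[q]? = some true}

end Aux

/-- Given inclusion dependencies of width at most `w` and
the truncated accessibility axioms of the access methods, the saturation
algorithm is sound (every triple in `O` is an entailed truncated
accessibility axiom) and complete for breadth at most `w` (every entailed
truncated accessibility axiom of breadth at most `w` has its triple in
`O`). -/
theorem stmt7 (ar : ℕ → ℕ) (Sid : Set IDl) (Ms : Set Methl) (w : ℕ)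
    (hwidth : ∀ δ ∈ Sid, δ.width ≤ w)
    (hwf : ∀ δ ∈ Sid, (∀ t, δ.bpos t < ar δ.B) ∧ (∀ t, δ.hpos t < ar δ.H))
    (hwfM : ∀ mt ∈ Ms, ∀ i ∈ mt.input, i < ar mt.rel) :
    (∀ (R : ℕ) (p : Finset ℕ) (j : ℕ),
        InO ar Sid Ms w R p j → EntailedAx ar Sid Ms R p j) ∧
    (∀ (R : ℕ) (p : Finset ℕ) (j : ℕ), p.card ≤ w →
        (∀ i ∈ p, i < ar R) → j < ar R →
        EntailedAx ar Sid Ms R p j → InO ar Sid Ms w R p j) := by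
  constructor
  · -- Soundness
    intro R p j h
    induction h with
    | triv hj hp =>
        intro D I A hWF hID hM l hl hlen hacc d hd
        exact hacc _ hj d hd
    | id hδ T t h ih =>
        rename_i δ
        intro D I A hWF hID hM l hl hlen hacc d hd
        obtain ⟨l', hl', hlen', heq⟩ := hID δ hδ l hl
        refine ih D I A hWF hID hM l' hl' hlen' ?_ d ?_
        · intro i hi d' hd'
          obtain ⟨s, hs, rfl⟩ := Finset.mem_image.mp hi
          rw [heq s] at hd'
          exact hacc _ (Finset.mem_image_of_mem _ hs) d' hd'
        · rw [heq t]; exact hd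
    | trans hts hp h1 h2 hsub ih1 ih2 =>
        intro D I A hWF hID hM l hl hlen hacc d hd
        refine ih2 D I A hWF hID hM l hl hlen ?_ d hd
        intro i hi d' hd'
        rcases Finset.mem_union.mp (hsub hi) with hip | hit
        · exact hacc i hip d' hd'
        · exact ih1 i hit D I A hWF hID hM l hl hlen hacc d' hd'
    | access hmt hp hin hj ih =>
        rename_i mt pp j
        intro D I A hWF hID hM l hl hlen hacc d hd
        refine hM mt hmt j hj l hl hlen ?_ d hd
        intro i hi d' hd'
        exact ih i hi D I A hWF hID hM l hl hlen hacc d' hd'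
  · -- Completeness
    intro R p j hpw hpar hjar hE
    classical
    -- the canonical instance and the counterexample tuple
    set I : Set (LFact Bool) := CInst ar Sid Ms w with hI
    set l₀ : List Bool :=
      List.ofFn (fun q : Fin (ar R) => bIf (Der ar Sid Ms w R (↑p) q.1)) with hl₀
    have hget : ∀ i, i < ar R →
        l₀[i]? = some (bIf (Der ar Sid Ms w R (↑p) i)) := by
      intro i hi
      simp [hl₀, List.getElem?_ofFn, List.ofFnNthVal, hi]
    have hgetnone : ∀ i, ¬ i < ar R → l₀[i]? = none := by
      intro i hi
      simp [hl₀, List.getElem?_ofFn, List.ofFnNthVal, hi]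
    have hWF : WFInst ar I := fun f hf => hf.1
    -- the canonical instance satisfies the inclusion dependencies
    have hID : ∀ δ ∈ Sid, SatIDl ar δ I := by
      intro δ hδ l hl
      obtain ⟨hlen, hcl⟩ := hl
      set T : Finset (Fin δ.width) :=
        Finset.univ.filter (fun s => l[δ.bpos s]? = some true) with hT
      have hTw : ∀ g : Fin δ.width → ℕ, (T.image g).card ≤ w := by
        intro g
        calc (T.image g).card ≤ T.card := Finset.card_image_le
          _ ≤ Finset.univ.card := Finset.card_le_card (Finset.subset_univ _)
          _ = δ.width := by simp
          _ ≤ w := hwidth δ hδ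
      set Y : Set ℕ := ↑(T.image δ.hpos) with hY
      set l' : List Bool :=
        List.ofFn (fun q : Fin (ar δ.H) => bIf (Der ar Sid Ms w δ.H Y q.1))
        with hl'
      have hget' : ∀ i, i < ar δ.H →
          l'[i]? = some (bIf (Der ar Sid Ms w δ.H Y i)) := by
        intro i hi
        simp [hl', List.getElem?_ofFn, hi]
      refine ⟨l', ⟨?_, ?_⟩, by simp [hl'], ?_⟩
      · simp [hl']
      · -- closedness of l'
        intro q hq hder
        have hder' : Der ar Sid Ms w δ.H Y q := by
          refine der_trans hder Y ?_
          intro y hy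
          have hy' : l'[y]? = some true := hy
          by_cases hyar : y < ar δ.H
          · rw [hget' y hyar] at hy'
            exact of_bIf_eq_true (Option.some.inj hy')
          · have : l'[y]? = none := by
              simp [hl', List.getElem?_ofFn, List.ofFnNthVal, hyar]
            rw [this] at hy'; cases hy'
        show l'[q]? = some true
        rw [hget' q hq, bIf_eq_true hder']
      · -- the exported positions agree
        intro t
        have hb : δ.bpos t < l.length := by rw [hlen]; exact (hwf δ hδ).1 t
        have hh : δ.hpos t < ar δ.H := (hwf δ hδ).2 t
        rw [hget' _ hh, List.getElem?_eq_getElem hb]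
        cases hbv : l[δ.bpos t]'hb with
        | true =>
            have ht : t ∈ T := by
              simp [hT, List.getElem?_eq_getElem hb, hbv]
            have : Der ar Sid Ms w δ.H Y (δ.hpos t) :=
              Der.mem (by exact_mod_cast Finset.mem_image_of_mem δ.hpos ht)
            rw [bIf_eq_true this]
        | false =>
            have hnd : ¬ Der ar Sid Ms w δ.H Y (δ.hpos t) := by
              intro hder
              have hO : InO ar Sid Ms w δ.H (T.image δ.hpos) (δ.hpos t) :=
                der_to_inO hder _ rfl (hTw _)
              have hOB : InO ar Sid Ms w δ.B (T.image δ.bpos) (δ.bpos t) :=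
                InO.id hδ T t hO
              have hderB : Der ar Sid Ms w δ.B {i | l[i]? = some true}
                  (δ.bpos t) := by
                refine Der.ino (T.image δ.bpos) ?_ (hTw _) hOB
                intro i hi
                obtain ⟨s, hs, rfl⟩ := Finset.mem_image.mp hi
                refine Der.mem ?_
                simp only [hT, Finset.mem_filter] at hs
                exact hs.2
              have h2 : l[δ.bpos t]? = some true :=
                hcl (δ.bpos t) (by rw [← hlen] at *; exact hb) hderB
              rw [List.getElem?_eq_getElem hb, hbv] at h2
              cases h2
            have : bIf (Der ar Sid Ms w δ.H Y (δ.hpos t)) = false := by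
              by_contra hc
              exact hnd (of_bIf_eq_true (eq_true_of_ne_false hc))
            rw [this]
    -- the canonical instance satisfies the method axioms
    have hM : ∀ mt ∈ Ms, ∀ j' < ar mt.rel, AxSat ar mt.rel mt.input j' I
        ({true} : Set Bool) := by
      intro mt hmt j' hj' l hl hlen hacc d hd
      obtain ⟨hlen', hcl⟩ := hl
      have hder : Der ar Sid Ms w mt.rel {i | l[i]? = some true} j' := by
        refine Der.acc mt hmt ?_ hj'
        intro i hi
        refine Der.mem ?_
        have hiar : i < l.length := by rw [hlen]; exact hwfM mt hmt i hi
        have := hacc i hi (l[i]'hiar) (List.getElem?_eq_getElem hiar)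
        simp only [Set.mem_singleton_iff] at this
        simp [List.getElem?_eq_getElem hiar, this]
      have := hcl j' hj' hder
      rw [this] at hd
      injection hd with hd
      simp [← hd]
    -- the counterexample tuple is in the instance
    have hl₀I : ((R, l₀) : LFact Bool) ∈ I := by
      refine ⟨by simp [hl₀], ?_⟩
      intro q hq hder
      have hder' : Der ar Sid Ms w R (↑p) q := by
        refine der_trans hder (↑p) ?_
        intro y hy
        have hy' : l₀[y]? = some true := hy
        by_cases hyar : y < ar R
        · rw [hget y hyar] at hy'
          exact of_bIf_eq_true (Option.some.inj hy')
        · rw [hgetnone y hyar] at hy'; cases hy'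
      show l₀[q]? = some true
      rw [hget q hq, bIf_eq_true hder']
    -- conclude
    have hax := hE Bool I ({true} : Set Bool) hWF hID hM l₀ hl₀I
      (by simp [hl₀]) ?_ (bIf (Der ar Sid Ms w R (↑p) j)) (hget j hjar)
    · have : Der ar Sid Ms w R (↑p) j := by
        refine of_bIf_eq_true ?_
        simpa using hax
      exact der_to_inO this p rfl hpw
    · intro i hi d hd
      rw [hget i (hpar i hi)] at hd
      injection hd with hd
      have : Der ar Sid Ms w R (↑p) i := Der.mem (by exact_mod_cast hi)
      rw [← hd, bIf_eq_true this]
      rfl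
end

section
/- Let Sch be a schema with access methods and result bounds, and let ElimUB(Sch) be the schema obtained by replacing every result bound k by a result lower bound k (removing the upper-bound requirement). Then a common subinstance I_acc of instances I1 and I2 is access-valid in I1 for Sch if and only if it is access-valid in I1 for ElimUB(Sch). Consequently a CQ is monotone answerable in Sch iff it is monotone answerable in ElimUB(Sch). -/
/-- A Boolean conjunctive query over `S`: finitely many atoms over
variables `Fin nv` (all existentially quantified). -/
structure CQ (S : RelSig) where
  nv : ℕ
  atoms : Finset ((R : S.Rel) × (Fin (S.ar R) → Fin nv))

/-- A Boolean CQ holds in an instance iff there is a homomorphism from its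
canonical database into the instance. -/
def CQ.holds {S : RelSig} {D : Type} (Q : CQ S) (I : DBInst S D) : Prop :=
  ∃ h : Fin Q.nv → D, ∀ a ∈ Q.atoms, (⟨a.1, fun i => h (a.2 i)⟩ : DBFact S D) ∈ I

/-- `h` is a homomorphism from `J` to `I`. -/
def IsHom {S : RelSig} {D E : Type} (h : D → E) (J : DBInst S D) (I : DBInst S E) : Prop :=
  ∀ f ∈ J, (⟨f.1, fun i => h (f.2 i)⟩ : DBFact S E) ∈ I

/-- An access method on a relation of `S`: a set of input positions and an
optional result bound. -/
structure Method (S : RelSig) where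
  rel : S.Rel
  input : Set (Fin (S.ar rel))
  bound : Option ℕ

/-- `X` contains at least `j` elements. -/
def AtLeast {α : Type _} (X : Set α) (j : ℕ) : Prop :=
  ∃ T : Finset α, ↑T ⊆ X ∧ T.card = j

/-- The matching tuples of the access `(mt, b)` on instance `I`: the
`mt.rel`-tuples of `I` agreeing with the binding `b` on the input
positions. -/
def matchTuples {S : RelSig} {D : Type} (mt : Method S) (b : Fin (S.ar mt.rel) → D)
    (I : DBInst S D) : Set (Fin (S.ar mt.rel) → D) :=
  {args | (⟨mt.rel, args⟩ : DBFact S D) ∈ I ∧ ∀ i ∈ mt.input, args i = b i}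

/-- `J` is a valid output for an access whose matching tuples are `M`.
If the method has no bound, the unique valid output is `M` itself.
If it has a (lower) bound `k`: for every `j ≤ k`, if there are at least `j`
matching tuples then at least `j` must be output; when `useUB = true` the
bound is moreover an upper bound (at most `k` tuples are output).  Thus
`useUB = true` corresponds to result bounds and `useUB = false` to the
schema `ElimUB(Sch)` with result lower bounds only. -/
def ValidOutput {S : RelSig} {D : Type} (useUB : Bool) (mt : Method S)
    (M J : Set (Fin (S.ar mt.rel) → D)) : Prop :=
  J ⊆ M ∧
    match mt.bound with
    | none => J = M
    | some k => (∀ j ≤ k, AtLeast M j → AtLeast J j) ∧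
        (useUB = true → ¬ AtLeast J (k + 1))

/-- `Iacc` is access-valid in `I1`: every access with a method of the schema
and a binding with values in `Iacc` admits a valid output (in `I1`) all of
whose tuples lie within `Iacc`. -/
def AccessValid {S : RelSig} {D : Type} (useUB : Bool) (Ms : Set (Method S))
    (Iacc I1 : DBInst S D) : Prop :=
  ∀ mt ∈ Ms, ∀ b : Fin (S.ar mt.rel) → D, (∀ i ∈ mt.input, b i ∈ adom Iacc) →
    ∃ J, ValidOutput useUB mt (matchTuples mt b I1) J ∧
      ∀ args ∈ J, (⟨mt.rel, args⟩ : DBFact S D) ∈ Iacc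

/-- Access monotonic-determinacy (`AMonDet`) of `Q`, which characterizes
monotone answerability: for all instances `I1, I2` satisfying the
constraints `C`, if they have a common subinstance that is access-valid in
`I1`, then `Q(I1) ⊆ Q(I2)`. -/
def AMonDet {S : RelSig} (useUB : Bool) (Ms : Set (Method S))
    (C : ∀ D : Type, DBInst S D → Prop) (Q : CQ S) : Prop :=
  ∀ (D : Type) (I1 I2 : DBInst S D), C D I1 → C D I2 →
    (∃ Iacc, Iacc ⊆ I1 ∧ Iacc ⊆ I2 ∧ AccessValid useUB Ms Iacc I1) →
    Q.holds I1 → Q.holds I2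

/-- Access-validity with result bounds coincides with
access-validity with the corresponding result lower bounds, and hence
(via the `AMonDet` characterization) monotone answerability in `Sch`
coincides with monotone answerability in `ElimUB(Sch)`. -/
theorem stmt10 (S : RelSig) (Ms : Set (Method S))
    (C : ∀ D : Type, DBInst S D → Prop) (Q : CQ S) :
    (∀ (D : Type) (I1 I2 Iacc : DBInst S D), Iacc ⊆ I1 → Iacc ⊆ I2 →
        (AccessValid true Ms Iacc I1 ↔ AccessValid false Ms Iacc I1)) ∧
    (AMonDet true Ms C Q ↔ AMonDet false Ms C Q) := by
  have key : ∀ (D : Type) (Iacc I1 : DBInst S D),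
      AccessValid true Ms Iacc I1 ↔ AccessValid false Ms Iacc I1 := by
    intro D Iacc I1
    constructor
    · intro h mt hmt b hb
      obtain ⟨J, ⟨hJM, hmatch⟩, hJacc⟩ := h mt hmt b hb
      refine ⟨J, ⟨hJM, ?_⟩, hJacc⟩
      cases hk : mt.bound with
      | none => simpa [hk] using hmatch
      | some k =>
        rw [hk] at hmatch
        exact ⟨hmatch.1, by simp⟩
    · intro h mt hmt b hb
      obtain ⟨J, ⟨hJM, hmatch⟩, hJacc⟩ := h mt hmt b hb
      cases hk : mt.bound with
      | none =>
        refine ⟨J, ⟨hJM, ?_⟩, hJacc⟩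
        simpa [hk] using hmatch
      | some k =>
        rw [hk] at hmatch
        obtain ⟨hlow, -⟩ := hmatch
        by_cases hbig : AtLeast J (k + 1)
        · obtain ⟨T, hTJ, hTcard⟩ := hbig
          obtain ⟨T', hT'T, hT'card⟩ := Finset.exists_subset_card_eq (show k ≤ T.card by omega)
          refine ⟨↑T', ⟨fun x hx => hJM (hTJ (hT'T hx)), ?_⟩, fun a ha => hJacc a (hTJ (hT'T ha))⟩
          rw [hk]
          constructor
          · intro j hj _
            obtain ⟨T'', hT''T', hT''card⟩ := Finset.exists_subset_card_eq (show j ≤ T'.card by omega)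
            exact ⟨T'', by exact_mod_cast Finset.coe_subset.mpr hT''T', hT''card⟩
          · intro _ ⟨T'', hT''T', hT''card⟩
            have : T'' ⊆ T' := by exact_mod_cast hT''T'
            have := Finset.card_le_card this
            omega
        · refine ⟨J, ⟨hJM, ?_⟩, hJacc⟩
          rw [hk]
          exact ⟨hlow, fun _ => hbig⟩
  refine ⟨fun D I1 I2 Iacc _ _ => key D Iacc I1, ?_⟩
  constructor
  · intro h D I1 I2 hC1 hC2 ⟨Iacc, h1, h2, hav⟩
    exact h D I1 I2 hC1 hC2 ⟨Iacc, h1, h2, (key D Iacc I1).mpr hav⟩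
  · intro h D I1 I2 hC1 hC2 ⟨Iacc, h1, h2, hav⟩
    exact h D I1 I2 hC1 hC2 ⟨Iacc, h1, h2, (key D Iacc I1).mp hav⟩
end

section
/- Let Sch be a schema whose constraints Σ consist of inclusion dependencies only (with access methods possibly result-bounded). If a CQ Q is access-determined with respect to Sch, then Q is access monotonically-determined (AMonDet) with respect to Sch. Hence for ID constraints, RA-answerability and monotone answerability coincide. -/
/-- An inclusion dependency over `S`: body and head each consist of a single
atom with no repeated variables; `width` many variables are exported from
the body positions `bpos` to the head positions `hpos`. -/
structure IncDep (S : RelSig) where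
  body : S.Rel
  head : S.Rel
  width : ℕ
  bpos : Fin width → Fin (S.ar body)
  hpos : Fin width → Fin (S.ar head)
  bpos_inj : Function.Injective bpos
  hpos_inj : Function.Injective hpos

/-- Satisfaction of an inclusion dependency. -/
def IncDep.Sat {S : RelSig} {D : Type} (δ : IncDep S) (I : DBInst S D) : Prop :=
  ∀ args : Fin (S.ar δ.body) → D, (⟨δ.body, args⟩ : DBFact S D) ∈ I →
    ∃ args' : Fin (S.ar δ.head) → D, (⟨δ.head, args'⟩ : DBFact S D) ∈ I ∧
      ∀ t, args' (δ.hpos t) = args (δ.bpos t)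

/-- `Iacc` is jointly access-valid in `I1` and `I2`: every access on values
of `Iacc` has an output within `Iacc` that is simultaneously valid in `I1`
and in `I2`. -/
def JointlyAccessValid {S : RelSig} {D : Type} (Ms : Set (Method S))
    (Iacc I1 I2 : DBInst S D) : Prop :=
  ∀ mt ∈ Ms, ∀ b : Fin (S.ar mt.rel) → D, (∀ i ∈ mt.input, b i ∈ adom Iacc) →
    ∃ J, ValidOutput true mt (matchTuples mt b I1) J ∧
      ValidOutput true mt (matchTuples mt b I2) J ∧
      ∀ args ∈ J, (⟨mt.rel, args⟩ : DBFact S D) ∈ Iacc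

/-- `Q` is access-determined (this characterizes RA-answerability): any two
instances satisfying the constraints with a common jointly access-valid
subinstance agree on `Q`. -/
def AccessDetermined {S : RelSig} (Ms : Set (Method S))
    (C : ∀ D : Type, DBInst S D → Prop) (Q : CQ S) : Prop :=
  ∀ (D : Type) (I1 I2 : DBInst S D), C D I1 → C D I2 →
    (∃ Iacc, Iacc ⊆ I1 ∧ Iacc ⊆ I2 ∧ JointlyAccessValid Ms Iacc I1 I2) →
    (Q.holds I1 ↔ Q.holds I2)

namespace Stmt12Aux

variable {S : RelSig} {D E F : Type}

/-- Renaming of an instance along a function on domains. -/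
def mapInst (f : D → E) (I : DBInst S D) : DBInst S E :=
  (fun g : DBFact S D => (⟨g.1, fun i => f (g.2 i)⟩ : DBFact S E)) '' I

lemma mem_mapInst {f : D → E} {I : DBInst S D} {R : S.Rel} {args : Fin (S.ar R) → E} :
    (⟨R, args⟩ : DBFact S E) ∈ mapInst f I ↔
      ∃ a : Fin (S.ar R) → D, (⟨R, a⟩ : DBFact S D) ∈ I ∧ args = fun i => f (a i) := by
  constructor
  · rintro ⟨⟨R', a⟩, hm, heq⟩
    obtain ⟨rfl, h2⟩ := Sigma.mk.inj_iff.mp heq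
    exact ⟨a, hm, (eq_of_heq h2).symm⟩
  · rintro ⟨a, ha, rfl⟩
    exact ⟨⟨R, a⟩, ha, rfl⟩

lemma sat_mapInst {f : D → E} {I : DBInst S D} {δ : IncDep S} (hδ : δ.Sat I) :
    δ.Sat (mapInst f I) := by
  intro args hargs
  obtain ⟨a, ha, rfl⟩ := mem_mapInst.mp hargs
  obtain ⟨a', ha', hcoord⟩ := hδ a ha
  exact ⟨fun i => f (a' i), mem_mapInst.mpr ⟨a', ha', rfl⟩,
    fun t => congrArg f (hcoord t)⟩

lemma sat_union {I I' : DBInst S D} {δ : IncDep S} (h1 : δ.Sat I) (h2 : δ.Sat I') :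
    δ.Sat (I ∪ I') := by
  intro args hargs
  rcases hargs with hIn | hIn
  · obtain ⟨a', m, c⟩ := h1 args hIn; exact ⟨a', Or.inl m, c⟩
  · obtain ⟨a', m, c⟩ := h2 args hIn; exact ⟨a', Or.inr m, c⟩

lemma holds_mono {I I' : DBInst S D} {Q : CQ S} (hs : I ⊆ I') (h : Q.holds I) : Q.holds I' :=
  let ⟨hm, hh⟩ := h; ⟨hm, fun a ha => hs (hh a ha)⟩

lemma holds_mapInst {f : D → E} {I : DBInst S D} {Q : CQ S} (h : Q.holds I) :
    Q.holds (mapInst f I) := by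
  obtain ⟨hm, hh⟩ := h
  exact ⟨fun v => f (hm v), fun a ha => mem_mapInst.mpr ⟨fun i => hm (a.2 i), hh a ha, rfl⟩⟩

lemma mapInst_comp {f : D → E} {g : E → F} {I : DBInst S D} :
    mapInst g (mapInst f I) = mapInst (fun d => g (f d)) I := by
  unfold mapInst
  rw [← Set.image_comp]
  rfl

lemma mapInst_id {I : DBInst S D} : mapInst (fun d => d) I = I :=
  Set.image_id I

lemma atLeast_mono {α : Type _} {X : Set α} {m n : ℕ} (h : AtLeast X n) (hmn : m ≤ n) :
    AtLeast X m := by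
  obtain ⟨T, hT, hc⟩ := h
  obtain ⟨T', hT', hc'⟩ := Finset.exists_subset_card_eq (s := T) (n := m) (hc ▸ hmn)
  exact ⟨T', (Finset.coe_subset.mpr hT').trans hT, hc'⟩

lemma atLeast_subset {α : Type _} {X Y : Set α} (hXY : X ⊆ Y) {j : ℕ} (h : AtLeast X j) :
    AtLeast Y j :=
  let ⟨T, hT, hc⟩ := h; ⟨T, hT.trans hXY, hc⟩

lemma atLeast_of_finset {α : Type _} (T : Finset α) {X : Set α} (hT : ↑T ⊆ X) {j : ℕ}
    (hj : j ≤ T.card) : AtLeast X j := by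
  obtain ⟨T', hT', hc'⟩ := Finset.exists_subset_card_eq (s := T) (n := j) hj
  exact ⟨T', (Finset.coe_subset.mpr hT').trans hT, hc'⟩

lemma atLeast_image {α β : Type _} {g : α → β} (hg : Function.Injective g) {X : Set α}
    {j : ℕ} (h : AtLeast X j) : AtLeast (g '' X) j := by
  obtain ⟨T, hT, hc⟩ := h
  classical
  refine ⟨T.image g, ?_, ?_⟩
  · rw [Finset.coe_image]; exact Set.image_mono hT
  · rw [Finset.card_image_of_injective _ hg, hc]

lemma not_atLeast_small {α : Type _} {X : Set α} {k : ℕ} (h : ¬ AtLeast X k) :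
    ∃ T : Finset α, X = ↑T ∧ T.card < k ∧ AtLeast X T.card := by
  classical
  induction k with
  | zero => exact absurd ⟨∅, by simp⟩ h
  | succ k ih =>
    by_cases hk : AtLeast X k
    · obtain ⟨T, hT, hc⟩ := hk
      have hX : X = ↑T := by
        apply Set.Subset.antisymm _ hT
        intro x hx
        by_contra hxT
        refine h ⟨insert x T, ?_, ?_⟩
        · intro y hy
          rcases Finset.mem_insert.mp hy with rfl | hyT
          · exact hx
          · exact hT hyT
        · rw [Finset.card_insert_of_notMem hxT, hc]
      exact ⟨T, hX, by omega, ⟨T, hT, rfl⟩⟩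
    · obtain ⟨T, h1, h2, h3⟩ := ih hk
      exact ⟨T, h1, by omega, h3⟩

lemma validOutput_none {u : Bool} {mt : Method S} (hb : mt.bound = none)
    {M J : Set (Fin (S.ar mt.rel) → D)} :
    ValidOutput u mt M J ↔ J = M := by
  unfold ValidOutput
  rw [hb]
  constructor
  · exact fun h => h.2
  · rintro rfl; exact ⟨subset_rfl, rfl⟩

lemma validOutput_some {u : Bool} {mt : Method S} {k : ℕ} (hb : mt.bound = some k)
    {M J : Set (Fin (S.ar mt.rel) → D)} :
    ValidOutput u mt M J ↔
      J ⊆ M ∧ (∀ j ≤ k, AtLeast M j → AtLeast J j) ∧ (u = true → ¬ AtLeast J (k + 1)) := by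
  unfold ValidOutput
  rw [hb]

lemma matchTuples_union {mt : Method S} {b : Fin (S.ar mt.rel) → D} {I I' : DBInst S D} :
    matchTuples mt b (I ∪ I') = matchTuples mt b I ∪ matchTuples mt b I' := by
  ext args
  simp only [matchTuples, Set.mem_setOf_eq, Set.mem_union, or_and_right]

lemma exists_validOutput (mt : Method S) (M : Set (Fin (S.ar mt.rel) → D)) :
    ∃ J, ValidOutput true mt M J ∧ J ⊆ M := by
  classical
  rcases hb : mt.bound with _ | k
  · exact ⟨M, (validOutput_none hb).mpr rfl, subset_rfl⟩
  · by_cases hk : AtLeast M k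
    · obtain ⟨T, hT, hc⟩ := hk
      refine ⟨↑T, (validOutput_some hb).mpr ⟨hT, ?_, ?_⟩, hT⟩
      · intro j hj _
        exact atLeast_of_finset T Set.Subset.rfl (hc ▸ hj)
      · rintro - ⟨T', hT', hc'⟩
        have := Finset.card_le_card (Finset.coe_subset.mp hT')
        omega
    · refine ⟨M, (validOutput_some hb).mpr ⟨subset_rfl, fun j _ hj => hj, ?_⟩, subset_rfl⟩
      exact fun _ hA => hk (atLeast_mono hA (Nat.le_succ k))

end Stmt12Aux

/-- If the constraints consist of inclusion dependencies
and `Q` is access-determined, then `Q` is `AMonDet`; hence (for ID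
constraints) access-determinacy and access monotonic-determinacy — i.e.
RA-answerability and monotone answerability — coincide. -/
theorem stmt12 (S : RelSig) (Sid : Set (IncDep S)) (Ms : Set (Method S)) (Q : CQ S)
    (h : AccessDetermined Ms (fun _ I => ∀ δ ∈ Sid, δ.Sat I) Q) :
    AMonDet true Ms (fun _ I => ∀ δ ∈ Sid, δ.Sat I) Q ∧
    (AccessDetermined Ms (fun _ I => ∀ δ ∈ Sid, δ.Sat I) Q ↔
      AMonDet true Ms (fun _ I => ∀ δ ∈ Sid, δ.Sat I) Q) := by
  classical
  have key : AMonDet true Ms (fun _ I => ∀ δ ∈ Sid, δ.Sat I) Q := by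
    rintro D I1 I2 hC1 hC2 ⟨Iacc, hs1, hs2, hav⟩ hQ1
    set ρ : D → D ⊕ D := fun d => if d ∈ adom Iacc then Sum.inl d else Sum.inr d with hρ
    set I1s : DBInst S (D ⊕ D) := Stmt12Aux.mapInst Sum.inl I1 with hI1s
    set I2' : DBInst S (D ⊕ D) := Stmt12Aux.mapInst ρ I2 with hI2'
    have hC1' : ∀ δ ∈ Sid, δ.Sat (I1s ∪ I2') := fun δ hδ =>
      Stmt12Aux.sat_union (Stmt12Aux.sat_mapInst (hC1 δ hδ)) (Stmt12Aux.sat_mapInst (hC2 δ hδ))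
    have hC2' : ∀ δ ∈ Sid, δ.Sat I2' := fun δ hδ => Stmt12Aux.sat_mapInst (hC2 δ hδ)
    have joint : JointlyAccessValid Ms I2' (I1s ∪ I2') I2' := by
      intro mt hmt b hb
      rw [Stmt12Aux.matchTuples_union]
      set M1 := matchTuples mt b I1s with hM1def
      set M2 := matchTuples mt b I2' with hM2def
      by_cases hcase : ∀ i ∈ mt.input, ∃ d, b i = Sum.inl d
      · -- all input values are of the form `inl d` with `d ∈ adom Iacc`
        set b0 : Fin (S.ar mt.rel) → D := fun i => Sum.elim id id (b i) with hb0
        have hbinl : ∀ i ∈ mt.input, b i = Sum.inl (b0 i) ∧ b0 i ∈ adom Iacc := by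
          intro i hi
          obtain ⟨d, hd⟩ := hcase i hi
          have hb0i : b0 i = d := by rw [hb0]; simp [hd]
          have hmem := hb i hi
          rw [hd] at hmem
          obtain ⟨⟨R, fargs⟩, hf, j, hj⟩ := hmem
          obtain ⟨a, ha, heq⟩ := Stmt12Aux.mem_mapInst.mp hf
          have hj' : ρ (a j) = Sum.inl d := by
            have := congrFun heq j
            rw [← this]; exact hj
          have hdacc : d ∈ adom Iacc := by
            by_cases hin : a j ∈ adom Iacc
            · have : (Sum.inl (a j) : D ⊕ D) = Sum.inl d := by
                rw [← hj', hρ]; simp [hin]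
              rwa [← Sum.inl.inj this]
            · exfalso
              have : (Sum.inr (a j) : D ⊕ D) = Sum.inl d := by
                rw [← hj', hρ]; simp [hin]
              exact Sum.inr_ne_inl this
          rw [hd, hb0i]
          exact ⟨rfl, hdacc⟩
        obtain ⟨J0, hJ0v, hJ0acc⟩ := hav mt hmt b0 (fun i hi => (hbinl i hi).2)
        set M1d := matchTuples mt b0 I1 with hM1dd
        have hJ0sub : J0 ⊆ M1d := hJ0v.1
        have hinj : Function.Injective
            (fun (a : Fin (S.ar mt.rel) → D) => fun i => (Sum.inl (a i) : D ⊕ D)) := by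
          intro a a' he
          funext i
          exact Sum.inl.inj (congrFun he i)
        have hJ0M2 : ∀ a ∈ J0, (fun i => (Sum.inl (a i) : D ⊕ D)) ∈ M2 := by
          intro a ha
          have hfact : (⟨mt.rel, a⟩ : DBFact S D) ∈ Iacc := hJ0acc a ha
          have hvals : ∀ i, a i ∈ adom Iacc := fun i => ⟨⟨mt.rel, a⟩, hfact, i, rfl⟩
          refine ⟨?_, ?_⟩
          · apply Stmt12Aux.mem_mapInst.mpr
            refine ⟨a, hs2 hfact, ?_⟩
            funext i
            rw [hρ]; simp [hvals i]
          · intro i hi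
            rw [(hbinl i hi).1]
            exact congrArg Sum.inl ((hJ0sub ha).2 i hi)
        have hJinlM2 : (fun (a : Fin (S.ar mt.rel) → D) =>
            fun i => (Sum.inl (a i) : D ⊕ D)) '' J0 ⊆ M2 := by
          rintro _ ⟨a, ha, rfl⟩
          exact hJ0M2 a ha
        have hM1sub : M1 ⊆ (fun (a : Fin (S.ar mt.rel) → D) =>
            fun i => (Sum.inl (a i) : D ⊕ D)) '' M1d := by
          rintro args ⟨hmem, hinput⟩
          obtain ⟨a, ha, rfl⟩ := Stmt12Aux.mem_mapInst.mp hmem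
          refine ⟨a, ⟨ha, ?_⟩, rfl⟩
          intro i hi
          have hbi := hinput i hi
          rw [(hbinl i hi).1] at hbi
          exact Sum.inl.inj hbi
        rcases hbnd : mt.bound with _ | k
        · -- no result bound: the access returns everything, and it lies in `Iacc`
          have hJ0eq : J0 = M1d := (Stmt12Aux.validOutput_none hbnd).mp hJ0v
          have hM1M2 : M1 ⊆ M2 := by
            intro args hargs
            obtain ⟨a, haM, rfl⟩ := hM1sub hargs
            exact hJ0M2 a (by rw [hJ0eq]; exact haM)
          have hMU : M1 ∪ M2 = M2 := Set.union_eq_self_of_subset_left hM1M2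
          exact ⟨M2, (Stmt12Aux.validOutput_none hbnd).mpr hMU.symm,
            (Stmt12Aux.validOutput_none hbnd).mpr rfl, fun args hargs => hargs.1⟩
        · obtain ⟨hsub0', hlow0, hub0⟩ := (Stmt12Aux.validOutput_some hbnd).mp hJ0v
          by_cases hbig : AtLeast M2 k
          · obtain ⟨T, hT, hc⟩ := hbig
            have hvalidT : ∀ M' : Set (Fin (S.ar mt.rel) → D ⊕ D), ↑T ⊆ M' →
                ValidOutput true mt M' ↑T := by
              intro M' hM'
              refine (Stmt12Aux.validOutput_some hbnd).mpr ⟨hM', ?_, ?_⟩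
              · intro j hj _
                exact Stmt12Aux.atLeast_of_finset T Set.Subset.rfl (hc ▸ hj)
              · rintro - ⟨T', hT', hc'⟩
                have := Finset.card_le_card (Finset.coe_subset.mp hT')
                omega
            exact ⟨↑T, hvalidT _ (hT.trans Set.subset_union_right), hvalidT _ hT,
              fun args hargs => (hT hargs).1⟩
          · have hM1dsmall : ¬ AtLeast M1d k := by
              intro hk
              exact hbig (Stmt12Aux.atLeast_subset hJinlM2
                (Stmt12Aux.atLeast_image hinj (hlow0 k le_rfl hk)))
            obtain ⟨T, hXT, hcard, hAtl⟩ := Stmt12Aux.not_atLeast_small hM1dsmall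
            have hJ0eq : J0 = M1d := by
              obtain ⟨T', hT'sub, hT'card⟩ := hlow0 T.card (le_of_lt hcard) hAtl
              have hT'T : T' ⊆ T := Finset.coe_subset.mp (by
                rw [← hXT] at *
                exact hT'sub.trans hJ0sub)
              have hTT' : T' = T := Finset.eq_of_subset_of_card_le hT'T (le_of_eq hT'card.symm)
              apply Set.Subset.antisymm hJ0sub
              rw [hXT, ← hTT']
              exact hT'sub
            have hM1M2 : M1 ⊆ M2 := by
              intro args hargs
              obtain ⟨a, haM, rfl⟩ := hM1sub hargs
              exact hJ0M2 a (by rw [hJ0eq]; exact haM)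
            have hMU : M1 ∪ M2 = M2 := Set.union_eq_self_of_subset_left hM1M2
            have hnotk1 : ¬ AtLeast M2 (k + 1) := fun hk =>
              hbig (Stmt12Aux.atLeast_mono hk (Nat.le_succ k))
            refine ⟨M2, (Stmt12Aux.validOutput_some hbnd).mpr
                ⟨Set.subset_union_right, ?_, fun _ => hnotk1⟩,
              (Stmt12Aux.validOutput_some hbnd).mpr
                ⟨subset_rfl, fun j hj hA => hA, fun _ => hnotk1⟩,
              fun args hargs => hargs.1⟩
            intro j hj hA
            rw [hMU] at hA
            exact hA
      · -- some input value is a fresh copy: no matches in `I1s`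
        push_neg at hcase
        obtain ⟨i0, hi0, hne⟩ := hcase
        have hM1empty : M1 = ∅ := by
          ext args
          simp only [Set.mem_empty_iff_false, iff_false]
          rintro ⟨hmem, hinput⟩
          obtain ⟨a, ha, rfl⟩ := Stmt12Aux.mem_mapInst.mp hmem
          exact hne (a i0) (hinput i0 hi0).symm
        obtain ⟨J, hJv, hJsub⟩ := Stmt12Aux.exists_validOutput mt M2
        rw [hM1empty, Set.empty_union]
        exact ⟨J, hJv, hJv, fun args hargs => (hJsub hargs).1⟩
    have hiff := h (D ⊕ D) (I1s ∪ I2') I2' hC1' hC2'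
      ⟨I2', Set.subset_union_right, subset_rfl, joint⟩
    have hQU : Q.holds (I1s ∪ I2') :=
      Stmt12Aux.holds_mono Set.subset_union_left (Stmt12Aux.holds_mapInst hQ1)
    have hQ2' : Q.holds I2' := hiff.mp hQU
    have h1 : Q.holds (Stmt12Aux.mapInst (Sum.elim id id) I2') := Stmt12Aux.holds_mapInst hQ2'
    rw [hI2', Stmt12Aux.mapInst_comp] at h1
    have hcomp : (fun d => Sum.elim id id (ρ d)) = fun d : D => d := by
      funext d
      simp only [hρ]
      split_ifs <;> rfl
    rwa [hcomp, Stmt12Aux.mapInst_id] at h1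
  exact ⟨key, fun _ => key, fun _ => h⟩
end
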